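/- Let N be a network on a finite set V with |V| ≥ 2. Then the flow relation 𝔉(N) = {(x,y) ∈ A : φ_{xy} ≥ φ_{yx}} ∪ {(x,x) : x ∈ V} is complete and quasi-transitive. -/

import Mathlib

/-- A flow from `s` to `t` in the network with capacity `c`: bounded by the
capacity on every arc and conserving flow at every vertex other than `s`, `t`. -/
def IsFlow {V : Type*} [Fintype V] [DecidableEq V]
    (c : V → V → ℕ) (s t : V) (f : V → V → ℕ) : Prop :=
  (∀ x y : V, x ≠ y → f x y ≤ c x y) ∧
  ∀ x : V, x ≠ s → x ≠ t →
    ∑ y ∈ Finset.univ.erase x, f x y = ∑ y ∈ Finset.univ.erase x, f y x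

/-- The value of a flow `f` from `s`: outflow of `s` minus inflow of `s`. -/
def flowValue {V : Type*} [Fintype V] [DecidableEq V]
    (f : V → V → ℕ) (s : V) : ℤ :=
  (∑ y ∈ Finset.univ.erase s, (f s y : ℤ)) -
    ∑ y ∈ Finset.univ.erase s, (f y s : ℤ)

/-- The maximum flow value `φ_{st}` from `s` to `t` in the network `c`. -/
noncomputable def maxFlow {V : Type*} [Fintype V] [DecidableEq V]
    (c : V → V → ℕ) (s t : V) : ℕ :=
  sSup {n : ℕ | ∃ f : V → V → ℕ, IsFlow c s t f ∧ flowValue f s = (n : ℤ)}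

/-- The flow relation `𝔉(N)`: `x ⪰ y` iff `x = y` or `x ≠ y` and `φ_{xy} ≥ φ_{yx}`. -/
def FlowRel {V : Type*} [Fintype V] [DecidableEq V]
    (c : V → V → ℕ) (x y : V) : Prop :=
  x = y ∨ (x ≠ y ∧ maxFlow c y x ≤ maxFlow c x y)

/-- A relation is complete if any two elements are comparable. -/
def CompleteRel {V : Type*} (R : V → V → Prop) : Prop :=
  ∀ x y : V, R x y ∨ R y x

/-- The strict part `S(R)` of a relation `R`. -/
def StrictPart {V : Type*} (R : V → V → Prop) (x y : V) : Prop :=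
  R x y ∧ ¬ R y x

/-- A relation is quasi-transitive if its strict part is transitive. -/
def QuasiTransitive {V : Type*} (R : V → V → Prop) : Prop :=
  Transitive (StrictPart R)

/-- The outdegree of `x` in the network `c`. -/
def outdeg {V : Type*} [Fintype V] [DecidableEq V] (c : V → V → ℕ) (x : V) : ℕ :=
  ∑ y ∈ Finset.univ.erase x, c x y

/-- The indegree of `x` in the network `c`. -/
def indeg {V : Type*} [Fintype V] [DecidableEq V] (c : V → V → ℕ) (x : V) : ℕ :=
  ∑ y ∈ Finset.univ.erase x, c y x


open Finset

section MaxFlowAux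

variable {V : Type*} [Fintype V] [DecidableEq V]

/-- Excess (inflow minus outflow) at a vertex. -/
def exc (f : V → V → ℕ) (v : V) : ℤ :=
  (∑ y ∈ Finset.univ.erase v, (f y v : ℤ)) - ∑ y ∈ Finset.univ.erase v, (f v y : ℤ)

/-- Capacity of the cut `S`. -/
def cutCap (c : V → V → ℕ) (S : Finset V) : ℕ :=
  ∑ a ∈ S, ∑ b ∈ Sᶜ, c a b

lemma sum_indicator_pair (u w v : V) (huw : u ≠ w) :
    ∑ y ∈ Finset.univ.erase v, (if y = u ∧ v = w then (1:ℤ) else 0)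
      = if v = w then 1 else 0 := by
  by_cases hv : v = w
  · subst hv
    simp only [and_true]
    rw [Finset.sum_ite_eq' (Finset.univ.erase v) u (fun _ => (1:ℤ))]
    simp [Finset.mem_erase, huw]
  · simp [hv]

lemma sum_indicator_pair' (u w v : V) (huw : u ≠ w) :
    ∑ y ∈ Finset.univ.erase v, (if v = u ∧ y = w then (1:ℤ) else 0)
      = if v = u then 1 else 0 := by
  by_cases hv : v = u
  · subst hv
    simp only [true_and]
    rw [Finset.sum_ite_eq' (Finset.univ.erase v) w (fun _ => (1:ℤ))]
    simp [Finset.mem_erase, huw.symm]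
  · simp [hv]

lemma exc_incr (g : V → V → ℕ) (u w : V) (huw : u ≠ w) (v : V) :
    exc (fun a b => g a b + if a = u ∧ b = w then 1 else 0) v
      = exc g v + (if v = w then 1 else 0) - (if v = u then 1 else 0) := by
  unfold exc
  push_cast
  rw [Finset.sum_add_distrib, Finset.sum_add_distrib,
    sum_indicator_pair u w v huw, sum_indicator_pair' u w v huw]
  ring

lemma exc_decr (g : V → V → ℕ) (u w : V) (huw : u ≠ w) (h1 : 1 ≤ g u w) (v : V) :
    exc (fun a b => g a b - if a = u ∧ b = w then 1 else 0) v
      = exc g v - (if v = w then 1 else 0) + (if v = u then 1 else 0) := by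
  have key : ∀ a b : V, ((g a b - if a = u ∧ b = w then 1 else 0 : ℕ) : ℤ)
      = (g a b : ℤ) - (if a = u ∧ b = w then (1:ℤ) else 0) := by
    intro a b
    by_cases h : a = u ∧ b = w
    · obtain ⟨rfl, rfl⟩ := h
      rw [if_pos ⟨rfl, rfl⟩, if_pos ⟨rfl, rfl⟩, Nat.cast_sub h1]
      norm_num
    · simp [h]
  unfold exc
  simp only [key]
  rw [Finset.sum_sub_distrib, Finset.sum_sub_distrib,
    sum_indicator_pair u w v huw, sum_indicator_pair' u w v huw]
  ring

lemma exc_eq_zero {c : V → V → ℕ} {s t : V} {f : V → V → ℕ} (hf : IsFlow c s t f)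
    {v : V} (hvs : v ≠ s) (hvt : v ≠ t) : exc f v = 0 := by
  have := hf.2 v hvs hvt
  unfold exc
  have h2 : ((∑ y ∈ Finset.univ.erase v, f v y : ℕ) : ℤ)
      = ((∑ y ∈ Finset.univ.erase v, f y v : ℕ) : ℤ) := by rw [this]
  push_cast at h2
  omega

lemma flowValue_eq_neg_exc (f : V → V → ℕ) (s : V) : flowValue f s = - exc f s := by
  unfold flowValue exc; ring

end MaxFlowAux
section CutAux

variable {V : Type*} [Fintype V] [DecidableEq V]

lemma erase_univ_eq_union {S : Finset V} {v : V} (hv : v ∈ S) :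
    Finset.univ.erase v = (S.erase v) ∪ Sᶜ := by
  ext w
  simp only [Finset.mem_erase, Finset.mem_union, Finset.mem_univ, and_true,
    Finset.mem_compl]
  constructor
  · intro hw
    by_cases hwS : w ∈ S
    · exact Or.inl ⟨hw, hwS⟩
    · exact Or.inr hwS
  · rintro (⟨hw, _⟩ | hw)
    · exact hw
    · rintro rfl; exact hw hv

lemma flowValue_eq_cut {c : V → V → ℕ} {s t : V} {f : V → V → ℕ}
    (hf : IsFlow c s t f) {S : Finset V} (hs : s ∈ S) (ht : t ∉ S) :
    flowValue f s = (∑ a ∈ S, ∑ b ∈ Sᶜ, (f a b : ℤ)) - ∑ a ∈ S, ∑ b ∈ Sᶜ, (f b a : ℤ) := by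
  have hst : s ≠ t := by rintro rfl; exact ht hs
  have hval : flowValue f s = ∑ v ∈ S, (- exc f v) := by
    rw [Finset.sum_eq_single_of_mem s hs, ← flowValue_eq_neg_exc]
    intro v hvS hvs
    have hvt : v ≠ t := by rintro rfl; exact ht hvS
    rw [exc_eq_zero hf hvs hvt, neg_zero]
  rw [hval]
  have hsplit : ∀ v ∈ S, - exc f v
      = (∑ y ∈ S.erase v, ((f v y : ℤ) - (f y v : ℤ)))
        + ∑ y ∈ Sᶜ, ((f v y : ℤ) - (f y v : ℤ)) := by
    intro v hv
    unfold exc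
    have h0 : -((∑ y ∈ Finset.univ.erase v, (f y v : ℤ)) - ∑ y ∈ Finset.univ.erase v, (f v y : ℤ))
        = ∑ y ∈ Finset.univ.erase v, ((f v y : ℤ) - (f y v : ℤ)) := by
      rw [Finset.sum_sub_distrib]; ring
    have hdisj : Disjoint (S.erase v) Sᶜ :=
      Finset.disjoint_left.2 (fun a ha hb => (Finset.mem_compl.1 hb) (Finset.mem_of_mem_erase ha))
    rw [h0, erase_univ_eq_union hv, Finset.sum_union hdisj]
  rw [Finset.sum_congr rfl hsplit, Finset.sum_add_distrib]
  have hzero : ∑ v ∈ S, ∑ y ∈ S.erase v, ((f v y : ℤ) - (f y v : ℤ)) = 0 := by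
    have : ∀ v ∈ S, ∑ y ∈ S.erase v, ((f v y : ℤ) - (f y v : ℤ))
        = ∑ y ∈ S, ((f v y : ℤ) - (f y v : ℤ)) := by
      intro v _
      exact Finset.sum_erase _ (by ring)
    rw [Finset.sum_congr rfl this]
    simp only [Finset.sum_sub_distrib]
    rw [Finset.sum_comm]
    exact sub_self _
  rw [hzero, zero_add, ← Finset.sum_sub_distrib]
  rw [Finset.sum_congr rfl (fun v _ => Finset.sum_sub_distrib _ _)]

lemma flowValue_le_cut {c : V → V → ℕ} {s t : V} {f : V → V → ℕ}
    (hf : IsFlow c s t f) {S : Finset V} (hs : s ∈ S) (ht : t ∉ S) :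
    flowValue f s ≤ (cutCap c S : ℤ) := by
  rw [flowValue_eq_cut hf hs ht]
  have h1 : (∑ a ∈ S, ∑ b ∈ Sᶜ, (f a b : ℤ)) ≤ (cutCap c S : ℤ) := by
    unfold cutCap
    push_cast
    refine Finset.sum_le_sum fun a ha => Finset.sum_le_sum fun b hb => ?_
    have hab : a ≠ b := by rintro rfl; exact (Finset.mem_compl.1 hb) ha
    exact_mod_cast hf.1 a b hab
  have h2 : (0:ℤ) ≤ ∑ a ∈ S, ∑ b ∈ Sᶜ, (f b a : ℤ) :=
    Finset.sum_nonneg fun a _ => Finset.sum_nonneg fun b _ => by positivity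
  omega

lemma zero_isFlow (c : V → V → ℕ) (s t : V) : IsFlow c s t (fun _ _ => 0) :=
  ⟨fun _ _ _ => Nat.zero_le _, fun _ _ _ => by simp⟩

lemma maxFlow_nonempty (c : V → V → ℕ) (s t : V) :
    {n : ℕ | ∃ f : V → V → ℕ, IsFlow c s t f ∧ flowValue f s = (n : ℤ)}.Nonempty :=
  ⟨0, fun _ _ => 0, zero_isFlow c s t, by unfold flowValue; simp⟩

lemma maxFlow_bddAbove (c : V → V → ℕ) (s t : V) :
    BddAbove {n : ℕ | ∃ f : V → V → ℕ, IsFlow c s t f ∧ flowValue f s = (n : ℤ)} := by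
  refine ⟨outdeg c s, fun n hn => ?_⟩
  obtain ⟨f, hf, hval⟩ := hn
  have h1 : (n : ℤ) ≤ (outdeg c s : ℤ) := by
    rw [← hval]
    unfold flowValue outdeg
    push_cast
    have h2 : (∑ y ∈ Finset.univ.erase s, (f s y : ℤ)) ≤ ∑ y ∈ Finset.univ.erase s, (c s y : ℤ) := by
      refine Finset.sum_le_sum fun y hy => ?_
      have := hf.1 s y (Finset.ne_of_mem_erase hy).symm
      exact_mod_cast this
    have h3 : (0:ℤ) ≤ ∑ y ∈ Finset.univ.erase s, (f y s : ℤ) :=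
      Finset.sum_nonneg fun y _ => by positivity
    omega
  exact_mod_cast h1

lemma exists_maxFlow (c : V → V → ℕ) (s t : V) :
    ∃ f : V → V → ℕ, IsFlow c s t f ∧ flowValue f s = (maxFlow c s t : ℤ) :=
  Nat.sSup_mem (maxFlow_nonempty c s t) (maxFlow_bddAbove c s t)

lemma le_maxFlow {c : V → V → ℕ} {s t : V} {f : V → V → ℕ} {n : ℕ}
    (hf : IsFlow c s t f) (hval : flowValue f s = (n : ℤ)) : n ≤ maxFlow c s t :=
  le_csSup (maxFlow_bddAbove c s t) ⟨f, hf, hval⟩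

lemma maxFlow_le_cut {c : V → V → ℕ} {s t : V} {S : Finset V} (hs : s ∈ S) (ht : t ∉ S) :
    maxFlow c s t ≤ cutCap c S := by
  obtain ⟨f, hf, hval⟩ := exists_maxFlow c s t
  have := flowValue_le_cut hf hs ht
  rw [hval] at this
  exact_mod_cast this

end CutAux
section Augment

variable {V : Type*} [Fintype V] [DecidableEq V]

/-- From a chain ending at `t` extract one whose vertex list is duplicate-free. -/
lemma exists_nodup_chain {r : V → V → Prop} {t : V} :
    ∀ (l : List V) (u : V), u ≠ t → List.Chain r u (l ++ [t]) →
      ∃ l' : List V, List.Chain r u (l' ++ [t]) ∧ (u :: (l' ++ [t])).Nodup := by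
  intro l
  induction l with
  | nil =>
      intro u hut hchain
      exact ⟨[], hchain, by simp [hut]⟩
  | cons q l ih =>
      intro u hut hchain
      rw [List.Chain, List.cons_append, List.chain_cons] at hchain
      obtain ⟨huq, hchain⟩ := hchain
      by_cases hqt : q = t
      · subst hqt
        exact ⟨[], List.isChain_pair.2 huq, by simp [hut]⟩
      · obtain ⟨l'', hc'', hnd''⟩ := ih q hqt hchain
        by_cases hu : u ∈ q :: (l'' ++ [t])
        · -- splice: u occurs in the found path; cut everything before u
          have hu' : u ∈ q :: l'' := by
            have h := hu
            simp only [List.mem_cons, List.mem_append, List.mem_singleton] at h ⊢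
            tauto
          obtain ⟨m₁, m₂, hm⟩ := List.append_of_mem hu'
          have hchainfull : List.Chain r u ((q :: l'') ++ [t]) := by
            rw [List.Chain, List.cons_append, List.chain_cons]; exact ⟨huq, hc''⟩
          rw [hm] at hchainfull
          have : List.Chain r u (m₁ ++ u :: (m₂ ++ [t])) := by
            simpa using hchainfull
          rw [List.Chain, List.isChain_cons_split] at this
          have hnd2 : (m₁ ++ (u :: (m₂ ++ [t]))).Nodup := by
            have h3 : ((q :: l'') ++ [t]).Nodup := by simpa using hnd''
            rw [hm] at h3
            simpa using h3
          exact ⟨m₂, this.2, hnd2.of_append_right⟩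
        · exact ⟨q :: l'', by rw [List.Chain, List.cons_append, List.chain_cons]; exact ⟨huq, hc''⟩,
            by rw [List.cons_append, List.nodup_cons]; exact ⟨by simpa using hu, hnd''⟩⟩

end Augment
section Push

variable {V : Type*} [Fintype V] [DecidableEq V]

/-- Residual relation of a flow. -/
def Res (c f : V → V → ℕ) (a b : V) : Prop :=
  a ≠ b ∧ (f a b < c a b ∨ 0 < f b a)

/-- Push one more unit of flow along a duplicate-free residual path. -/
lemma push {c : V → V → ℕ} {s t : V} {f : V → V → ℕ} :
    ∀ (l : List V) (u : V) (g : V → V → ℕ),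
      List.Chain (Res c f) u (l ++ [t]) → (u :: (l ++ [t])).Nodup →
      (∀ a b, a ≠ b → g a b ≤ c a b) →
      (∀ v, exc g v = exc f v + (if v = u then 1 else 0) - (if v = s then 1 else 0)) →
      (∀ a b, a ∈ l ++ [t] ∨ b ∈ l ++ [t] → g a b = f a b) →
      ∃ g' : V → V → ℕ, (∀ a b, a ≠ b → g' a b ≤ c a b) ∧
        (∀ v, exc g' v = exc f v + (if v = t then 1 else 0) - (if v = s then 1 else 0)) := by
  intro l
  induction l with
  | nil =>
      intro u g hchain hnd hcap hexc hagr
      rw [List.nil_append, List.Chain, List.isChain_pair] at hchain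
      obtain ⟨hut, hres⟩ := hchain
      have hgut : g u t = f u t := hagr u t (Or.inr (by simp))
      have hgtu : g t u = f t u := hagr t u (Or.inl (by simp))
      rcases hres with hlt | hpos
      · refine ⟨fun a b => g a b + if a = u ∧ b = t then 1 else 0, ?_, ?_⟩
        · intro a b hab
          show g a b + (if a = u ∧ b = t then 1 else 0) ≤ c a b
          by_cases h : a = u ∧ b = t
          · obtain ⟨rfl, rfl⟩ := h
            rw [if_pos (⟨rfl, rfl⟩ : a = a ∧ b = b)]
            omega
          · rw [if_neg h, add_zero]; exact hcap a b hab
        · intro v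
          rw [exc_incr g u t hut v, hexc v]
          ring
      · refine ⟨fun a b => g a b - if a = t ∧ b = u then 1 else 0, ?_, ?_⟩
        · intro a b hab
          exact le_trans (Nat.sub_le _ _) (hcap a b hab)
        · intro v
          rw [exc_decr g t u (Ne.symm hut) (by omega) v, hexc v]
          ring
  | cons q l ih =>
      intro u g hchain hnd hcap hexc hagr
      rw [List.Chain, List.cons_append, List.chain_cons] at hchain
      obtain ⟨⟨huq, hres⟩, hchain⟩ := hchain
      have hgu : g u q = f u q := hagr u q (Or.inr (by simp))
      have hgq : g q u = f q u := hagr q u (Or.inl (by simp))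
      have hnd' : (q :: (l ++ [t])).Nodup := by
        rw [List.cons_append, List.nodup_cons] at hnd
        exact hnd.2
      have hul : u ∉ q :: (l ++ [t]) := by
        rw [List.cons_append, List.nodup_cons] at hnd
        exact hnd.1
      have hql : q ∉ l ++ [t] := (List.nodup_cons.1 hnd').1
      rcases hres with hlt | hpos
      · set g' : V → V → ℕ := fun a b => g a b + if a = u ∧ b = q then 1 else 0 with hg'
        refine ih q g' hchain hnd' ?_ ?_ ?_
        · intro a b hab
          show g a b + (if a = u ∧ b = q then 1 else 0) ≤ c a b
          by_cases h : a = u ∧ b = q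
          · obtain ⟨rfl, rfl⟩ := h
            rw [if_pos (⟨rfl, rfl⟩ : a = a ∧ b = b)]
            omega
          · rw [if_neg h, add_zero]; exact hcap a b hab
        · intro v
          rw [hg', exc_incr g u q huq v, hexc v]
          ring
        · intro a b hab
          have h1 : ¬(a = u ∧ b = q) := by
            rintro ⟨ha, hb⟩
            rcases hab with h | h
            · exact hul (List.mem_cons_of_mem q (ha ▸ h))
            · exact hql (hb ▸ h)
          simp only [hg', if_neg h1, add_zero]
          exact hagr a b (by
            rcases hab with h | h
            · exact Or.inl (List.mem_cons_of_mem q h)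
            · exact Or.inr (List.mem_cons_of_mem q h))
      · set g' : V → V → ℕ := fun a b => g a b - if a = q ∧ b = u then 1 else 0 with hg'
        refine ih q g' hchain hnd' ?_ ?_ ?_
        · intro a b hab
          exact le_trans (Nat.sub_le _ _) (hcap a b hab)
        · intro v
          rw [hg', exc_decr g q u (Ne.symm huq) (by omega) v, hexc v]
          ring
        · intro a b hab
          have h1 : ¬(a = q ∧ b = u) := by
            rintro ⟨ha, hb⟩
            rcases hab with h | h
            · exact hql (ha ▸ h)
            · exact hul (List.mem_cons_of_mem q (hb ▸ h))
          simp only [hg', if_neg h1, Nat.sub_zero]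
          exact hagr a b (by
            rcases hab with h | h
            · exact Or.inl (List.mem_cons_of_mem q h)
            · exact Or.inr (List.mem_cons_of_mem q h))

end Push
section MinCut

variable {V : Type*} [Fintype V] [DecidableEq V]

lemma cons_from_exc_zero {g : V → V → ℕ} {x : V} (h : exc g x = 0) :
    ∑ y ∈ Finset.univ.erase x, g x y = ∑ y ∈ Finset.univ.erase x, g y x := by
  unfold exc at h
  have h2 : ((∑ y ∈ Finset.univ.erase x, g x y : ℕ) : ℤ)
      = ((∑ y ∈ Finset.univ.erase x, g y x : ℕ) : ℤ) := by
    push_cast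
    omega
  exact_mod_cast h2

lemma exists_min_cut (c : V → V → ℕ) {s t : V} (hst : s ≠ t) :
    ∃ S : Finset V, s ∈ S ∧ t ∉ S ∧ cutCap c S ≤ maxFlow c s t := by
  classical
  obtain ⟨f, hf, hval⟩ := exists_maxFlow c s t
  by_cases hreach : Relation.ReflTransGen (Res c f) s t
  · exfalso
    obtain ⟨l, hchain, hlast⟩ := List.exists_isChain_cons_of_relationReflTransGen hreach
    have hlne : l ≠ [] := by
      rintro rfl
      exact hst (by simpa using hlast)
    have hlastl : l.getLast hlne = t := by
      rw [← List.getLast_cons (a := s) hlne]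
      exact hlast
    have hl2 : l.dropLast ++ [t] = l := by
      rw [← hlastl]
      exact List.dropLast_append_getLast hlne
    have hchain' : List.Chain (Res c f) s (l.dropLast ++ [t]) := by rw [hl2]; exact hchain
    obtain ⟨l', hc', hnd'⟩ := exists_nodup_chain l.dropLast s hst hchain'
    obtain ⟨g, hgcap, hgexc⟩ := push l' s f hc' hnd' hf.1
      (fun v => by ring) (fun a b _ => rfl)
    have hgflow : IsFlow c s t g := by
      refine ⟨hgcap, fun x hxs hxt => ?_⟩
      refine cons_from_exc_zero ?_
      rw [hgexc x, if_neg hxt, if_neg hxs, exc_eq_zero hf hxs hxt]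
      ring
    have hgval : flowValue g s = ((maxFlow c s t + 1 : ℕ) : ℤ) := by
      rw [flowValue_eq_neg_exc, hgexc s, if_neg hst, if_pos rfl]
      push_cast
      have : - exc f s = (maxFlow c s t : ℤ) := by
        rw [← flowValue_eq_neg_exc]; exact hval
      omega
    have := le_maxFlow hgflow hgval
    omega
  · set S := Finset.univ.filter (fun v => Relation.ReflTransGen (Res c f) s v) with hS
    have hsS : s ∈ S := Finset.mem_filter.2 ⟨Finset.mem_univ s, Relation.ReflTransGen.refl⟩
    have htS : t ∉ S := by simp [hS, hreach]
    refine ⟨S, hsS, htS, ?_⟩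
    have key : ∀ a ∈ S, ∀ b ∈ Sᶜ, f a b = c a b ∧ f b a = 0 := by
      intro a ha b hb
      have hbS : b ∉ S := Finset.mem_compl.1 hb
      have hab : a ≠ b := by rintro rfl; exact hbS ha
      have hra : Relation.ReflTransGen (Res c f) s a := by
        simpa [hS] using ha
      have hnr : ¬ Res c f a b := by
        intro h
        exact hbS (Finset.mem_filter.2 ⟨Finset.mem_univ b, hra.tail h⟩)
      unfold Res at hnr
      push_neg at hnr
      have h2 := hnr hab
      have h3 := hf.1 a b hab
      omega
    have hcut : (cutCap c S : ℤ) = (maxFlow c s t : ℤ) := by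
      have h1 : (∑ a ∈ S, ∑ b ∈ Sᶜ, (f a b : ℤ)) = ∑ a ∈ S, ∑ b ∈ Sᶜ, (c a b : ℤ) :=
        Finset.sum_congr rfl fun a ha => Finset.sum_congr rfl fun b hb => by
          rw [(key a ha b hb).1]
      have h2 : (∑ a ∈ S, ∑ b ∈ Sᶜ, (f b a : ℤ)) = 0 :=
        Finset.sum_eq_zero fun a ha => Finset.sum_eq_zero fun b hb => by
          rw [(key a ha b hb).2]; norm_num
      rw [← hval, flowValue_eq_cut hf hsS htS, h1, h2]
      unfold cutCap
      push_cast
      ring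
    exact_mod_cast hcut.le

lemma triangle (c : V → V → ℕ) {x y z : V} (hxy : x ≠ y) (hyz : y ≠ z) (hxz : x ≠ z) :
    maxFlow c x y ≤ maxFlow c x z ∨ maxFlow c y z ≤ maxFlow c x z := by
  obtain ⟨S, hxS, hzS, hcut⟩ := exists_min_cut c hxz
  by_cases hy : y ∈ S
  · right
    obtain ⟨g, hg, hgval⟩ := exists_maxFlow c y z
    have := flowValue_le_cut hg hy hzS
    rw [hgval] at this
    have h2 : maxFlow c y z ≤ cutCap c S := by exact_mod_cast this
    omega
  · left
    obtain ⟨g, hg, hgval⟩ := exists_maxFlow c x y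
    have := flowValue_le_cut hg hxS hy
    rw [hgval] at this
    have h2 : maxFlow c x y ≤ cutCap c S := by exact_mod_cast this
    omega

end MinCut

lemma strictPart_iff {V : Type*} [Fintype V] [DecidableEq V] (c : V → V → ℕ) (x y : V) :
    StrictPart (FlowRel c) x y ↔ x ≠ y ∧ maxFlow c y x < maxFlow c x y := by
  constructor
  · rintro ⟨h1, h2⟩
    rcases h1 with rfl | ⟨hne, hle⟩
    · exact absurd (Or.inl rfl) h2
    · refine ⟨hne, lt_of_le_of_ne hle fun h => ?_⟩
      exact h2 (Or.inr ⟨hne.symm, h.ge⟩)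
  · rintro ⟨hne, hlt⟩
    refine ⟨Or.inr ⟨hne, hlt.le⟩, ?_⟩
    rintro (h | ⟨-, hle⟩)
    · exact hne h.symm
    · omega

/-- The flow relation `𝔉(N)` of any network is complete and quasi-transitive. -/
theorem stmt2 {V : Type*} [Fintype V] [DecidableEq V]
    (hV : 2 ≤ Fintype.card V) (c : V → V → ℕ) :
    CompleteRel (FlowRel c) ∧ QuasiTransitive (FlowRel c) := by
  constructor
  · intro x y
    by_cases hxy : x = y
    · exact Or.inl (Or.inl hxy)
    · rcases le_total (maxFlow c y x) (maxFlow c x y) with h | h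
      · exact Or.inl (Or.inr ⟨hxy, h⟩)
      · exact Or.inr (Or.inr ⟨Ne.symm hxy, h⟩)
  · intro x y z hxy hyz
    rw [strictPart_iff] at hxy hyz ⊢
    obtain ⟨hxyne, hxylt⟩ := hxy
    obtain ⟨hyzne, hyzlt⟩ := hyz
    have hxz : x ≠ z := by
      rintro rfl
      omega
    refine ⟨hxz, ?_⟩
    have t1 := triangle c hxyne hyzne hxz
    have t2 := triangle c hxz.symm hxyne hyzne.symm
    have t3 := triangle c hyzne hxz.symm hxyne.symm
    by_contra hcon
    push_neg at hcon
    rcases t1 with h | h <;> rcases t2 with h' | h' <;> rcases t3 with h'' | h'' <;> omega
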